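/- The equation x² + 1 = 2y^z has no positive integer solutions (x, y, z) with y > 1 and z an odd integer greater than 1. -/

import Mathlib

open Finset

namespace Stmt3

abbrev GI := GaussianInt

def Iu : GI := ⟨0, 1⟩
def Uu : GI := ⟨1, 1⟩
def Vu : GI := ⟨1, -1⟩

lemma Iu_sq : Iu ^ 2 = -1 := by
  ext <;> simp [Iu, pow_two, Zsqrtd.re_mul, Zsqrtd.im_mul]

lemma Iu_pow_even (N : ℕ) : Iu ^ (2 * N) = ((-1 : GI)) ^ N := by
  rw [pow_mul, Iu_sq]

lemma Iu_pow_odd (N : ℕ) : Iu ^ (2 * N + 1) = ((-1 : GI)) ^ N * Iu := by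
  rw [pow_succ, Iu_pow_even]

lemma Uu_sq : Uu ^ 2 = (2 : ℤ) * Iu := by
  ext <;> simp [Iu, Uu, pow_two, Zsqrtd.re_mul, Zsqrtd.im_mul]

lemma Uu_pow_even (r : ℕ) : Uu ^ (2 * r) = ((2 ^ r : ℤ) : GI) * Iu ^ r := by
  rw [pow_mul, Uu_sq, mul_pow]
  push_cast
  ring

lemma Uu_pow_odd (r : ℕ) : Uu ^ (2 * r + 1) = ((2 ^ r : ℤ) : GI) * (Iu ^ r * Uu) := by
  rw [pow_succ, Uu_pow_even, mul_assoc]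

lemma im_intCast_mul (n : ℤ) (ξ : GI) : ((n : GI) * ξ).im = n * ξ.im := by
  simp [Zsqrtd.im_mul]

def J (n : ℕ) : ℤ := (Uu ^ n).im

lemma J_dvd (n : ℕ) : (2 : ℤ) ^ (n / 2) ∣ J n := by
  rcases Nat.even_or_odd n with ⟨r, hr⟩ | ⟨r, hr⟩
  · have h2 : n = 2 * r := by omega
    have hd : 2 * r / 2 = r := by omega
    rw [J, h2, hd, Uu_pow_even, im_intCast_mul]
    exact Dvd.intro _ rfl
  · have h2 : n = 2 * r + 1 := by omega
    have hd : (2 * r + 1) / 2 = r := by omega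
    rw [J, h2, hd, Uu_pow_odd, im_intCast_mul]
    exact Dvd.intro _ rfl

lemma Iu_im_even (s : ℕ) : (Iu ^ (2 * s)).im = 0 := by
  rw [Iu_pow_even]
  rcases Nat.even_or_odd s with h | h
  · rw [h.neg_one_pow]; rfl
  · rw [h.neg_one_pow]; rfl

lemma neg_one_pow_cast (s : ℕ) : ((-1 : GI)) ^ s = (((-1 : ℤ)) ^ s : ℤ) := by
  push_cast; ring

lemma Iu_im_odd (s : ℕ) : (Iu ^ (2 * s + 1)).im = (-1) ^ s := by
  rw [Iu_pow_odd, neg_one_pow_cast, im_intCast_mul]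
  simp [Iu]

lemma IuUu_im_even (s : ℕ) : (Iu ^ (2 * s) * Uu).im = (-1) ^ s := by
  rw [Iu_pow_even, neg_one_pow_cast, im_intCast_mul]
  simp [Uu]

lemma IuUu_im_odd (s : ℕ) : (Iu ^ (2 * s + 1) * Uu).im = (-1) ^ s := by
  rw [Iu_pow_odd, neg_one_pow_cast, mul_assoc, im_intCast_mul]
  have : (Iu * Uu).im = 1 := by simp [Iu, Uu, Zsqrtd.im_mul]
  rw [this, mul_one]

lemma J_even (r : ℕ) : J (2 * r) = 2 ^ r * (Iu ^ r).im := by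
  rw [J, Uu_pow_even, im_intCast_mul]

lemma J_odd (r : ℕ) : J (2 * r + 1) = 2 ^ r * (Iu ^ r * Uu).im := by
  rw [J, Uu_pow_odd, im_intCast_mul]



lemma two_mul_le_two_pow : ∀ v : ℕ, 2 * v ≤ 2 ^ v := by
  intro v
  induction v with
  | zero => norm_num
  | succ n ih =>
    rcases Nat.eq_zero_or_pos n with h | h
    · subst h; norm_num
    · have h2 : (2:ℕ) ≤ 2 ^ n := by
        calc (2:ℕ) ≤ 2 * n := by omega
        _ ≤ 2 ^ n := ih
      rw [pow_succ]
      omega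

lemma padic_le_half {k : ℕ} (hk : 1 ≤ k) : padicValNat 2 k ≤ k / 2 := by
  have h1 : (2:ℕ) ^ padicValNat 2 k ∣ k := pow_padicValNat_dvd
  have h2 : (2:ℕ) ^ padicValNat 2 k ≤ k := Nat.le_of_dvd (by omega) h1
  have h3 := two_mul_le_two_pow (padicValNat 2 k)
  omega

lemma lemV {k : ℕ} (hk : 2 ≤ k) :
    padicValNat 2 k + padicValNat 2 (k - 1) ≤ k / 2 := by
  rcases Nat.even_or_odd k with h | h
  · have h1 : padicValNat 2 (k - 1) = 0 := by
      apply padicValNat.eq_zero_of_not_dvd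
      rcases h with ⟨r, hr⟩
      omega
    have := padic_le_half (k := k) (by omega)
    omega
  · have h1 : padicValNat 2 k = 0 := by
      apply padicValNat.eq_zero_of_not_dvd
      rcases h with ⟨r, hr⟩
      omega
    have := padic_le_half (k := k - 1) (by omega)
    omega

lemma lemW {M k : ℕ} (hM : 1 ≤ M) (hk2 : 2 ≤ k) (hkz : k ≤ 2 * M + 1) :
    padicValNat 2 (2 * M) ≤
      padicValNat 2 ((2 * M + 1).choose k) + padicValNat 2 k + padicValNat 2 (k - 1) := by
  have A1 : (2 * M + 1) * (2 * M).choose (k - 1) = (2 * M + 1).choose k * k := by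
    have h := Nat.add_one_mul_choose_eq (2 * M) (k - 1)
    have hk1 : k - 1 + 1 = k := by omega
    rw [hk1] at h
    exact h
  have A2 : (2 * M) * (2 * M - 1).choose (k - 2) = (2 * M).choose (k - 1) * (k - 1) := by
    have h := Nat.add_one_mul_choose_eq (2 * M - 1) (k - 2)
    have e1 : 2 * M - 1 + 1 = 2 * M := by omega
    have e2 : k - 2 + 1 = k - 1 := by omega
    rw [e1, e2] at h
    exact h
  have key : (2 * M + 1).choose k * k * (k - 1) = (2 * M + 1) * ((2 * M) * (2 * M - 1).choose (k - 2)) := by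
    rw [A2, ← A1]; ring
  have hC1 : 0 < (2 * M + 1).choose k := Nat.choose_pos (by omega)
  have hC2 : 0 < (2 * M - 1).choose (k - 2) := Nat.choose_pos (by omega)
  have hv := congrArg (padicValNat 2) key
  rw [padicValNat.mul (by positivity) (by omega),
      padicValNat.mul (by positivity) (by omega),
      padicValNat.mul (by omega) (by positivity),
      padicValNat.mul (by omega) (by positivity)] at hv
  omega

lemma int_decomp {t : ℤ} (ht : t ≠ 0) :
    ∃ (v : ℕ) (t₀ : ℤ), Odd t₀ ∧ t = 2 ^ v * t₀ := by
  obtain ⟨v, u, hu, huv⟩ := Nat.exists_eq_pow_mul_and_not_dvd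
    (Int.natAbs_ne_zero.mpr ht) 2 (by norm_num)
  rcases Int.natAbs_eq t with h | h
  · exact ⟨v, u, by rwa [Int.odd_coe_nat, Nat.odd_iff, ← Nat.two_dvd_ne_zero],
      by rw [h, huv]; push_cast; ring⟩
  · refine ⟨v, -u, ?_, by rw [h, huv]; push_cast; ring⟩
    rw [odd_neg]
    rwa [Int.odd_coe_nat, Nat.odd_iff, ← Nat.two_dvd_ne_zero]

lemma nat_decomp {M : ℕ} (hM : M ≠ 0) :
    ∃ (w : ℕ) (M₀ : ℕ), Odd M₀ ∧ M = 2 ^ w * M₀ := by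
  obtain ⟨w, u, hu, huv⟩ := Nat.exists_eq_pow_mul_and_not_dvd hM 2 (by norm_num)
  exact ⟨w, u, by rwa [Nat.odd_iff, ← Nat.two_dvd_ne_zero], huv⟩

lemma padic_two_mul {M w M₀ : ℕ} (hM₀ : Odd M₀) (hM : M = 2 ^ w * M₀) :
    padicValNat 2 (2 * M) = w + 1 := by
  subst hM
  have h0 : M₀ ≠ 0 := by rintro rfl; simp at hM₀
  have : 2 * (2 ^ w * M₀) = 2 ^ (w + 1) * M₀ := by ring
  rw [this, padicValNat.mul (by positivity) h0, padicValNat.prime_pow,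
      padicValNat.eq_zero_of_not_dvd (by rwa [Nat.odd_iff, ← Nat.two_dvd_ne_zero] at hM₀)]



def imHom : GI →+ ℤ where
  toFun := Zsqrtd.im
  map_zero' := rfl
  map_add' _ _ := rfl

lemma pow_two_succ_not_dvd {E M : ℕ} {S : ℤ} (hd : (2:ℤ) ^ (M + 2) ∣ S)
    (hS : S = 2 ^ (M + 1) ∨ S = -(2 ^ (M + 1))) : False := by
  have hd2 : (2:ℤ) ^ (M + 2) ∣ 2 ^ (M + 1) := by
    rcases hS with rfl | rfl
    · exact hd
    · exact (dvd_neg).mp hd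
  have hle := Int.le_of_dvd (by positivity) hd2
  have hpos : (0:ℤ) < 2 ^ (M + 1) := by positivity
  rw [pow_succ (2:ℤ) (M+1)] at hle
  linarith

lemma core1 (M : ℕ) (hM : 1 ≤ M) (c σ : ℤ) (hc4 : c % 4 = 1) (hσ : σ = 1 ∨ σ = -1)
    (h : ((⟨c, 1⟩ : GI) ^ (2 * M + 1)).im = σ * 2 ^ M) : c = 1 := by
  by_contra hne
  set t : ℤ := c - 1 with htdef
  have ht0 : t ≠ 0 := by omega
  obtain ⟨v, t₀, ht₀, htd⟩ := int_decomp ht0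
  have hv2 : 2 ≤ v := by
    have h4 : t % 4 = 0 := by omega
    rcases ht₀ with ⟨r, hr⟩
    match v with
    | 0 => rw [htd] at h4; omega
    | 1 => rw [htd] at h4; omega
    | (n+2) => omega
  have hxe : (⟨c, 1⟩ : GI) = ((t : GI) + Uu) := by
    ext <;> simp [Uu, htdef]
  rw [hxe, add_pow] at h
  have hmap : ((∑ k ∈ range (2 * M + 1 + 1),
      (t : GI) ^ k * Uu ^ (2 * M + 1 - k) * ((2 * M + 1).choose k : GI))).im
      = ∑ k ∈ range (2 * M + 1 + 1),
        (t ^ k * ((2 * M + 1).choose k : ℤ) * J (2 * M + 1 - k)) := by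
    rw [show ((∑ k ∈ range (2 * M + 1 + 1),
      (t : GI) ^ k * Uu ^ (2 * M + 1 - k) * ((2 * M + 1).choose k : GI))).im
      = imHom (∑ k ∈ range (2 * M + 1 + 1),
      (t : GI) ^ k * Uu ^ (2 * M + 1 - k) * ((2 * M + 1).choose k : GI)) from rfl,
      map_sum]
    refine Finset.sum_congr rfl ?_
    intro k _
    have e1 : (t : GI) ^ k * Uu ^ (2 * M + 1 - k) * ((2 * M + 1).choose k : GI)
        = (((t ^ k * ((2 * M + 1).choose k : ℤ)) : ℤ) : GI) * Uu ^ (2 * M + 1 - k) := by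
      push_cast
      ring
    rw [e1]
    show ((((t ^ k * ((2 * M + 1).choose k : ℤ)) : ℤ) : GI) * Uu ^ (2 * M + 1 - k)).im = _
    rw [im_intCast_mul]
    rfl
  rw [hmap] at h
  set f : ℕ → ℤ := fun k => t ^ k * ((2 * M + 1).choose k : ℤ) * J (2 * M + 1 - k) with hfdef
  have key : ∑ k ∈ range (2 * M + 1 + 1), f k = (∑ i ∈ range (2 * M), f (i + 2)) + f 1 + f 0 := by
    rw [Finset.sum_range_succ', Finset.sum_range_succ' (fun i => f (i + 1)) (2 * M)]
  rw [key] at h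
  have hf0 : f 0 = J (2 * M + 1) := by simp [hfdef]
  have hf1 : f 1 = t * (2 * M + 1 : ℤ) * J (2 * M) := by
    simp [hfdef]
  have htk : ∀ k : ℕ, (2:ℤ) ^ (k * v) ∣ t ^ k := by
    intro k
    refine ⟨t₀ ^ k, ?_⟩
    rw [htd, mul_pow, ← pow_mul, mul_comm v k]
  rcases Nat.even_or_odd M with hMe | hMo
  · -- M even case
    obtain ⟨N, hN⟩ : ∃ N, M = 2 * N := by rcases hMe with ⟨N, hN⟩; exact ⟨N, by omega⟩
    obtain ⟨N₁, hN₁⟩ : ∃ N₁, N = N₁ + 1 := ⟨N - 1, by omega⟩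
    have hJz : J (2 * M + 1) = (-1) ^ N * 2 ^ M := by
      rw [J_odd M, hN, IuUu_im_even]
      ring
    have hJ1 : J (2 * M) = 0 := by
      rw [J_even, hN, Iu_im_even, mul_zero]
    have hf1' : f 1 = 0 := by rw [hf1, hJ1, mul_zero]
    obtain ⟨K, hK⟩ : ∃ K, 2 * M = K + 1 := ⟨2 * M - 1, by omega⟩
    have hsplit : (∑ i ∈ range (2 * M), f (i + 2)) =
        (∑ i ∈ range K, f (i + 3)) + f 2 := by
      rw [hK, Finset.sum_range_succ' (fun i => f (i + 2)) K]
    rw [hsplit] at h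
    have hC2 : ((2 * M + 1).choose 2) = (2 * M + 1) * M := by
      rw [Nat.choose_two_right]
      have e1 : (2 * M + 1) * (2 * M + 1 - 1) = ((2 * M + 1) * M) * 2 := by
        have e2 : 2 * M + 1 - 1 = 2 * M := by omega
        rw [e2]; ring
      rw [e1, Nat.mul_div_cancel _ (by norm_num)]
    have hJ2 : J (2 * M + 1 - 2) = (-1) ^ N₁ * 2 ^ (M - 1) := by
      have e : 2 * M + 1 - 2 = 2 * (M - 1) + 1 := by omega
      have e2 : M - 1 = 2 * N₁ + 1 := by omega
      rw [e, J_odd, e2, IuUu_im_odd, ← e2]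
      ring
    obtain ⟨w, M₀, hM₀, hMw⟩ := nat_decomp (show M ≠ 0 by omega)
    have hvw : padicValNat 2 (2 * M) = w + 1 := padic_two_mul hM₀ hMw
    have hf2 : f 2 = 2 ^ (2 * v + w + (M - 1)) * (t₀ ^ 2 * (2 * M + 1 : ℤ) * (M₀ : ℤ) * (-1) ^ N₁) := by
      show t ^ 2 * ((2 * M + 1).choose 2 : ℤ) * J (2 * M + 1 - 2) = _
      rw [hC2, hJ2, htd]
      have e3 : (((2 * M + 1) * M : ℕ) : ℤ) = (2 * M + 1 : ℤ) * (2 ^ w * (M₀ : ℤ)) := by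
        rw [hMw]; push_cast; ring
      rw [e3]
      rw [pow_add, pow_add]
      push_cast
      ring
    have hgodd2 : Odd (t₀ ^ 2 * (2 * M + 1 : ℤ) * (M₀ : ℤ) * (-1) ^ N₁) := by
      refine Odd.mul (Odd.mul (Odd.mul (ht₀.pow) ⟨M, by push_cast; ring⟩) ?_) (Odd.pow ⟨-1, by ring⟩)
      exact (Int.odd_coe_nat M₀).mpr hM₀
    have claimB : ∀ i ∈ range K, (2:ℤ) ^ (2 * v + w + (M - 1) + 1) ∣ f (i + 3) := by
      intro i hi
      rw [Finset.mem_range] at hi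
      have h3 : (2:ℤ) ^ (padicValNat 2 ((2 * M + 1).choose (i + 3))) ∣ (((2 * M + 1).choose (i + 3) : ℕ) : ℤ) := by
        exact_mod_cast Int.natCast_dvd_natCast.mpr (pow_padicValNat_dvd)
      have hdvd : (2:ℤ) ^ (((i + 3) * v + padicValNat 2 ((2 * M + 1).choose (i + 3))) + (2 * M + 1 - (i + 3)) / 2) ∣ f (i + 3) := by
        show _ ∣ t ^ (i + 3) * ((2 * M + 1).choose (i + 3) : ℤ) * J (2 * M + 1 - (i + 3))
        rw [pow_add, pow_add]
        exact mul_dvd_mul (mul_dvd_mul (htk _) h3) (J_dvd _)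
      refine dvd_trans (pow_dvd_pow 2 ?_) hdvd
      have hW := lemW (M := M) (k := i + 3) hM (by omega) (by omega)
      have hV := lemV (k := i + 3) (by omega)
      rw [hvw] at hW
      have e3 : i + 3 - 1 = i + 2 := by omega
      rw [e3] at hW hV
      have hexp : (i + 3) * v = i * v + 3 * v := by ring
      rw [hexp]
      have hp : 2 * i ≤ i * v := by
        calc 2 * i = i * 2 := by ring
        _ ≤ i * v := Nat.mul_le_mul_left i hv2
      generalize i * v = p at hp ⊢
      omega
    rw [hf0, hf1', hJz, add_zero] at h
    set g : ℤ := (-1) ^ N with hgdef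
    have hg : g = 1 ∨ g = -1 := by
      rcases Nat.even_or_odd N with he | ho
      · left; rw [hgdef, he.neg_one_pow]
      · right; rw [hgdef, ho.neg_one_pow]
    by_cases hsg : σ = g
    · have hzero : f 2 = -(∑ i ∈ range K, f (i + 3)) := by
        rw [hsg] at h
        linarith [h]
      have hd : (2:ℤ) ^ (2 * v + w + (M - 1) + 1) ∣ f 2 := by
        rw [hzero]
        exact dvd_neg.mpr (Finset.dvd_sum claimB)
      rw [hf2, pow_succ] at hd
      rcases hd with ⟨e, he⟩
      have hcan : t₀ ^ 2 * (2 * M + 1 : ℤ) * (M₀ : ℤ) * (-1) ^ N₁ = 2 * e := by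
        have hne0 : ((2:ℤ) ^ (2 * v + w + (M - 1))) ≠ 0 := by positivity
        apply mul_left_cancel₀ hne0
        rw [he]; ring
      rw [hcan] at hgodd2
      exact (Int.not_odd_iff_even.mpr ⟨e, by ring⟩) hgodd2
    · have hsg2 : σ - g = 2 ∨ σ - g = -2 := by
        rcases hσ with rfl | rfl <;> rcases hg with h1 | h1 <;> omega
      have hsum2 : (∑ i ∈ range K, f (i + 3)) + f 2 = (σ - g) * 2 ^ M := by
        linarith [h]
      have hd : (2:ℤ) ^ (M + 2) ∣ (σ - g) * 2 ^ M := by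
        rw [← hsum2]
        refine dvd_add (Finset.dvd_sum ?_) ?_
        · intro i hi
          exact dvd_trans (pow_dvd_pow 2 (by omega)) (claimB i hi)
        · rw [hf2]
          exact Dvd.dvd.mul_right (pow_dvd_pow 2 (by omega)) _
      refine pow_two_succ_not_dvd (E := 0) hd ?_
      rcases hsg2 with h1 | h1 <;> rw [h1]
      · left; rw [pow_succ]; ring
      · right; rw [pow_succ]; ring
  · -- M odd case
    obtain ⟨N, hN⟩ := hMo
    have hJz : J (2 * M + 1) = (-1) ^ N * 2 ^ M := by
      rw [J_odd M, hN, IuUu_im_odd]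
      ring
    have hJ1 : J (2 * M) = (-1) ^ N * 2 ^ M := by
      rw [J_even, hN, Iu_im_odd]
      ring
    have hf1v : f 1 = 2 ^ (M + v) * (t₀ * (2 * M + 1 : ℤ) * (-1) ^ N) := by
      rw [hf1, hJ1, htd]
      rw [pow_add]
      ring
    have hgodd : Odd (t₀ * (2 * M + 1 : ℤ) * (-1) ^ N) :=
      Odd.mul (Odd.mul ht₀ ⟨M, by push_cast; ring⟩) (Odd.pow ⟨-1, by ring⟩)
    have claimA : ∀ i ∈ range (2 * M), (2:ℤ) ^ (M + v + 1) ∣ f (i + 2) := by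
      intro i hi
      rw [Finset.mem_range] at hi
      have hdvd : (2:ℤ) ^ (((i + 2) * v + 0) + (2 * M + 1 - (i + 2)) / 2) ∣ f (i + 2) := by
        show _ ∣ t ^ (i + 2) * ((2 * M + 1).choose (i + 2) : ℤ) * J (2 * M + 1 - (i + 2))
        rw [pow_add, pow_add]
        exact mul_dvd_mul (mul_dvd_mul (htk _) (pow_zero (2:ℤ) ▸ one_dvd _)) (J_dvd _)
      refine dvd_trans (pow_dvd_pow 2 ?_) hdvd
      have hexp : (i + 2) * v = i * v + 2 * v := by ring
      rw [hexp]
      have hp : 2 * i ≤ i * v := by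
        calc 2 * i = i * 2 := by ring
        _ ≤ i * v := Nat.mul_le_mul_left i hv2
      generalize i * v = p at hp ⊢
      omega
    rw [hf0, hJz] at h
    set g : ℤ := (-1) ^ N with hgdef
    have hg : g = 1 ∨ g = -1 := by
      rcases Nat.even_or_odd N with he | ho
      · left; rw [hgdef, he.neg_one_pow]
      · right; rw [hgdef, ho.neg_one_pow]
    by_cases hsg : σ = g
    · have hzero : f 1 = -(∑ i ∈ range (2 * M), f (i + 2)) := by
        rw [hsg] at h
        linarith [h]
      have hd : (2:ℤ) ^ (M + v + 1) ∣ f 1 := by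
        rw [hzero]
        exact dvd_neg.mpr (Finset.dvd_sum claimA)
      rw [hf1v, pow_succ] at hd
      rcases hd with ⟨e, he⟩
      have hcan : t₀ * (2 * M + 1 : ℤ) * (-1) ^ N = 2 * e := by
        have hne0 : ((2:ℤ) ^ (M + v)) ≠ 0 := by positivity
        apply mul_left_cancel₀ hne0
        rw [he]; ring
      rw [hcan] at hgodd
      exact (Int.not_odd_iff_even.mpr ⟨e, by ring⟩) hgodd
    · have hsg2 : σ - g = 2 ∨ σ - g = -2 := by
        rcases hσ with rfl | rfl <;> rcases hg with h1 | h1 <;> omega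
      have hsum2 : (∑ i ∈ range (2 * M), f (i + 2)) + f 1 = (σ - g) * 2 ^ M := by
        linarith [h]
      have hd : (2:ℤ) ^ (M + 2) ∣ (σ - g) * 2 ^ M := by
        rw [← hsum2]
        refine dvd_add (Finset.dvd_sum ?_) ?_
        · intro i hi
          exact dvd_trans (pow_dvd_pow 2 (by omega)) (claimA i hi)
        · rw [hf1v]
          exact Dvd.dvd.mul_right (pow_dvd_pow 2 (by omega)) _
      refine pow_two_succ_not_dvd (E := 0) hd ?_
      rcases hsg2 with h1 | h1 <;> rw [h1]
      · left; rw [pow_succ]; ring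
      · right; rw [pow_succ]; ring



lemma neg_c_im (c : ℤ) {z : ℕ} (hz : Odd z) :
    ((⟨-c, 1⟩ : GI) ^ z).im = ((⟨c, 1⟩ : GI) ^ z).im := by
  have h1 : (⟨-c, 1⟩ : GI) = -(star (⟨c, 1⟩ : GI)) := by
    ext <;> simp [Zsqrtd.re_star, Zsqrtd.im_star]
  rw [h1, hz.neg_pow, ← star_pow]
  rw [Zsqrtd.im_neg, Zsqrtd.im_star, neg_neg]

lemma core (M : ℕ) (hM : 1 ≤ M) (c σ : ℤ) (hc : Odd c) (hσ : σ = 1 ∨ σ = -1)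
    (h : ((⟨c, 1⟩ : GI) ^ (2 * M + 1)).im = σ * 2 ^ M) : c ^ 2 = 1 := by
  have hc2 : c % 2 = 1 := Int.odd_iff.mp hc
  have h4 : c % 4 = 1 ∨ c % 4 = 3 := by omega
  rcases h4 with h4 | h4
  · rw [core1 M hM c σ h4 hσ h]
    norm_num
  · have h4' : (-c) % 4 = 1 := by omega
    have hzodd : Odd (2 * M + 1) := ⟨M, by omega⟩
    have him := neg_c_im c hzodd
    have hc1 := core1 M hM (-c) σ h4' hσ (by rw [him]; exact h)
    have hcm : c = -1 := by omega
    rw [hcm]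
    norm_num

lemma re_intCast_mul (n : ℤ) (ξ : GI) : ((n : GI) * ξ).re = n * ξ.re := by
  simp [Zsqrtd.re_mul]
lemma im_intCast_mul' (n : ℤ) (ξ : GI) : ((n : GI) * ξ).im = n * ξ.im := by
  simp [Zsqrtd.im_mul]
lemma intCast_mul_cast (A B : ℤ) : ((A : GI)) * (B : GI) = ((A * B : ℤ) : GI) := by
  push_cast; ring
lemma neg_pm {s : ℤ} (h : s = 1 ∨ s = -1) : -s = 1 ∨ -s = -1 := by omega
lemma cancel_pow {n : ℕ} {X Y : ℤ} (h : (2:ℤ)^n * X = 2^n * Y) : X = Y :=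
  mul_left_cancel₀ (pow_ne_zero n two_ne_zero) h

lemma units_eq {U : GI} (hU : IsUnit U) : U = 1 ∨ U = -1 ∨ U = Iu ∨ U = -Iu := by
  have h1 := Zsqrtd.norm_eq_one_iff.mpr hU
  have h3 : U.norm = U.re * U.re + U.im * U.im := by rw [Zsqrtd.norm_def]; ring
  have h4 : 0 ≤ U.norm := Zsqrtd.norm_nonneg (by norm_num) U
  have h2 : U.re * U.re + U.im * U.im = 1 := by rw [← h3]; omega
  have hre : U.re = -1 ∨ U.re = 0 ∨ U.re = 1 := by
    have hb1 : -1 ≤ U.re := by nlinarith [sq_nonneg U.im, sq_nonneg (U.re + 1)]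
    have hb2 : U.re ≤ 1 := by nlinarith [sq_nonneg U.im, sq_nonneg (U.re - 1)]
    omega
  have him : U.im = -1 ∨ U.im = 0 ∨ U.im = 1 := by
    have hb1 : -1 ≤ U.im := by nlinarith [sq_nonneg U.re, sq_nonneg (U.im + 1)]
    have hb2 : U.im ≤ 1 := by nlinarith [sq_nonneg U.re, sq_nonneg (U.im - 1)]
    omega
  rcases hre with h | h | h <;> rcases him with h' | h' | h'
  · exfalso; rw [h, h'] at h2; norm_num at h2
  · right; left; ext <;> simp [h, h']
  · exfalso; rw [h, h'] at h2; norm_num at h2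
  · right; right; right; ext <;> simp [Iu, h, h']
  · exfalso; rw [h, h'] at h2; norm_num at h2
  · right; right; left; ext <;> simp [Iu, h, h']
  · exfalso; rw [h, h'] at h2; norm_num at h2
  · left; ext <;> simp [h, h']
  · exfalso; rw [h, h'] at h2; norm_num at h2

lemma Iu_pow_four : Iu ^ 4 = 1 := by
  have h : Iu ^ 4 = (Iu ^ 2) ^ 2 := by ring
  rw [h, Iu_sq]; ring

lemma Iu_pow_mod (z : ℕ) : Iu ^ z = Iu ^ (z % 4) := by
  conv_lhs => rw [← Nat.div_add_mod z 4]
  rw [pow_add, pow_mul, Iu_pow_four, one_pow, one_mul]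

lemma unit_root {U : GI} (hU : IsUnit U) {z : ℕ} (hz : Odd z) :
    ∃ V : GI, V ^ z = U := by
  have hz4 : z % 4 = 1 ∨ z % 4 = 3 := by
    rcases hz with ⟨k, hk⟩; omega
  have hIz : Iu ^ z = Iu ^ (z % 4) := Iu_pow_mod z
  have hneg : ∀ W : GI, (-W) ^ z = -(W ^ z) := fun W => hz.neg_pow W
  have hI3 : Iu ^ 3 = -Iu := by
    have h : Iu ^ 3 = Iu ^ 2 * Iu := by ring
    rw [h, Iu_sq]; ring
  rcases units_eq hU with rfl | rfl | rfl | rfl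
  · exact ⟨1, one_pow z⟩
  · exact ⟨-1, by rw [hneg, one_pow]⟩
  · rcases hz4 with h4 | h4
    · exact ⟨Iu, by rw [hIz, h4, pow_one]⟩
    · exact ⟨-Iu, by rw [hneg, hIz, h4, hI3]; ring⟩
  · rcases hz4 with h4 | h4
    · exact ⟨-Iu, by rw [hneg, hIz, h4, pow_one]⟩
    · exact ⟨Iu, by rw [hIz, h4, hI3]⟩

theorem main : ¬ ∃ x y z : ℕ, 0 < x ∧ 1 < y ∧ Odd z ∧ 1 < z ∧
    x ^ 2 + 1 = 2 * y ^ z := by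
  rintro ⟨x, y, z, hx, hy, hzodd, hz1, heq⟩
  obtain ⟨M, hMz⟩ : ∃ M, z = 2 * M + 1 := by rcases hzodd with ⟨k, hk⟩; exact ⟨k, by omega⟩
  have hM1 : 1 ≤ M := by omega
  rw [pow_two] at heq
  obtain ⟨m, hm⟩ : ∃ m, x = 2 * m + 1 := by
    rcases Nat.even_or_odd x with ⟨k, hk⟩ | ⟨k, hk⟩
    · exfalso
      have h1 : x * x = 2 * (2 * k * k) := by rw [hk]; ring
      omega
    · exact ⟨k, by omega⟩
  have hyz : y ^ z = m * m + (m + 1) * (m + 1) := by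
    have h3 : x * x = 2 * (2 * (m * m) + 2 * m) + 1 := by rw [hm]; ring
    have h4 : m * m + (m + 1) * (m + 1) = 2 * (m * m) + 2 * m + 1 := by ring
    omega
  have hyzodd : y ^ z % 2 = 1 := by
    have h4 : m * m + (m + 1) * (m + 1) = 2 * (m * m + m) + 1 := by ring
    omega
  have hyodd : y % 2 = 1 := by
    have hp := Nat.pow_mod y z 2
    rcases Nat.even_or_odd y with ⟨k, hk⟩ | ho
    · exfalso
      have hy2 : y % 2 = 0 := by omega
      rw [hy2, Nat.zero_pow (by omega : 0 < z)] at hp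
      omega
    · rcases ho with ⟨k, hk⟩; omega
  set α : GI := ⟨(m : ℤ), (m : ℤ) + 1⟩ with hα
  have hyzZ : ((y : ℤ)) ^ z = (m : ℤ) * (m : ℤ) + ((m : ℤ) + 1) * ((m : ℤ) + 1) := by
    exact_mod_cast congrArg (Nat.cast (R := ℤ)) hyz
  have hprod : α * star α = (((y : ℤ) : GI)) ^ z := by
    have hc : (((y : ℤ) : GI)) ^ z = ((((y : ℤ) ^ z) : ℤ) : GI) := by
      push_cast; ring
    rw [hc]
    have hare : α.re = (m : ℤ) := rfl
    have haim : α.im = (m : ℤ) + 1 := rfl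
    have hre0 : ((((y : ℤ) ^ z) : ℤ) : GI).re = (y : ℤ) ^ z := Zsqrtd.re_intCast _
    have him0 : ((((y : ℤ) ^ z) : ℤ) : GI).im = 0 := Zsqrtd.im_intCast _
    ext
    · rw [Zsqrtd.re_mul, hre0, Zsqrtd.re_star, Zsqrtd.im_star, hare, haim, hyzZ]; ring
    · rw [Zsqrtd.im_mul, him0, Zsqrtd.re_star, Zsqrtd.im_star, hare, haim]; ring
  have hα0 : α ≠ 0 := by
    intro hh
    have h := congrArg Zsqrtd.im hh
    simp [hα] at h
    omega
  have hco : IsCoprime α (star α) := by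
    apply isCoprime_of_prime_dvd
    · rintro ⟨h1, -⟩; exact hα0 h1
    · intro P hP hPα hPsα
      have h2 : P ∣ ((2 * (m : ℤ) : ℤ) : GI) := by
        have hd := dvd_add hPα hPsα
        have e : α + star α = ((2 * (m : ℤ) : ℤ) : GI) := by
          ext <;> simp [hα, Zsqrtd.re_star, Zsqrtd.im_star] <;> ring
        rwa [e] at hd
      have h3 : P ∣ ((2 * (m : ℤ) + 2 : ℤ) : GI) := by
        have hd := dvd_sub hPα hPsα
        have e : (α - star α) * ⟨0, -1⟩ = ((2 * (m : ℤ) + 2 : ℤ) : GI) := by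
          ext <;> simp [hα, Zsqrtd.re_star, Zsqrtd.im_star, Zsqrtd.re_mul, Zsqrtd.im_mul] <;> ring
        have hd2 : P ∣ (α - star α) * ⟨0, -1⟩ := Dvd.dvd.mul_right hd _
        rwa [e] at hd2
      have h4 : P ∣ ((2 : ℤ) : GI) := by
        have hd := dvd_sub h3 h2
        have e : ((2 * (m : ℤ) + 2 : ℤ) : GI) - ((2 * (m : ℤ) : ℤ) : GI) = ((2 : ℤ) : GI) := by
          push_cast; ring
        rwa [e] at hd
      have hn2 : P.norm ∣ 4 := by
        obtain ⟨Q, hQ⟩ := h4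
        have hnm := congrArg Zsqrtd.norm hQ
        rw [Zsqrtd.norm_mul, Zsqrtd.norm_intCast] at hnm
        exact ⟨Q.norm, by linarith [hnm]⟩
      have hnα : P.norm ∣ ((y : ℤ)) ^ z := by
        obtain ⟨Q, hQ⟩ := hPα
        have hnm := congrArg Zsqrtd.norm hQ
        rw [Zsqrtd.norm_mul] at hnm
        have hnormα : α.norm = ((y : ℤ)) ^ z := by
          rw [Zsqrtd.norm_def, hyzZ]
          simp [hα]
          ring
        rw [hnormα] at hnm
        exact ⟨Q.norm, hnm⟩
      -- natAbs arithmetic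
      have hP0 : P.norm.natAbs ≠ 1 := fun hc => hP.not_unit (Zsqrtd.norm_eq_one_iff.mp hc)
      have hd4 : P.norm.natAbs ∣ 4 := by
        have := Int.natAbs_dvd_natAbs.mpr hn2
        simpa using this
      have hdyz : P.norm.natAbs ∣ y ^ z := by
        have h5 := Int.natAbs_dvd_natAbs.mpr hnα
        have h6 : ((y : ℤ) ^ z).natAbs = y ^ z := by
          rw [← Nat.cast_pow]
          exact Int.natAbs_natCast _
        rwa [h6] at h5
      have h2d : 2 ∣ P.norm.natAbs ∨ P.norm.natAbs = 1 := by
        have h7 : P.norm.natAbs ≤ 4 := Nat.le_of_dvd (by norm_num) hd4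
        interval_cases h : P.norm.natAbs <;> revert hd4 <;> norm_num
      rcases h2d with h2d | h2d
      · have : 2 ∣ y ^ z := dvd_trans h2d hdyz
        omega
      · exact hP0 h2d
  -- factor as exact z-th power
  obtain ⟨w1, hw1⟩ := exists_associated_pow_of_mul_eq_pow' hco hprod
  obtain ⟨uu, huu⟩ := hw1
  obtain ⟨V, hV⟩ := unit_root (Units.isUnit uu) hzodd
  set w₀ : GI := w1 * V with hw₀def
  have hw0 : w₀ ^ z = α := by
    rw [hw₀def, mul_pow, hV, huu]
  set a : ℤ := w₀.re with hadef
  set b : ℤ := w₀.im with hbdef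
  have hnw : w₀.norm = (y : ℤ) := by
    have h6 : (w₀ ^ z).norm = w₀.norm ^ z := map_pow Zsqrtd.normMonoidHom w₀ z
    have hnormα : α.norm = ((y:ℤ)) ^ z := by
      rw [Zsqrtd.norm_def]
      rw [show α.re = (m : ℤ) from rfl, show α.im = (m : ℤ) + 1 from rfl, hyzZ]
      ring
    have h5 : w₀.norm ^ z = ((y:ℤ)) ^ z := by rw [← h6, hw0, hnormα]
    have hnn : 0 ≤ w₀.norm := Zsqrtd.norm_nonneg (by norm_num) _
    have h7 : w₀.norm.natAbs ^ z = y ^ z := by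
      have h8 := congrArg Int.natAbs h5
      rwa [Int.natAbs_pow, Int.natAbs_pow, Int.natAbs_natCast] at h8
    have h8 : w₀.norm.natAbs = y := Nat.pow_left_injective (by omega) h7
    omega
  have hab : a * a + b * b = (y : ℤ) := by
    rw [← hnw, Zsqrtd.norm_def]
    rw [← hadef, ← hbdef]
    ring
  have hyoddZ : Odd ((y:ℤ)) := by
    rw [Int.odd_coe_nat]
    exact Nat.odd_iff.mpr hyodd
  have hparity : Odd (a + b) ∧ Odd (a - b) := by
    rcases Int.even_or_odd a with ha | ha <;> rcases Int.even_or_odd b with hb | hb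
    · exfalso
      have he : Even (a*a + b*b) := (ha.mul_right a).add (hb.mul_right b)
      rw [hab] at he
      exact (Int.not_odd_iff_even.mpr he) hyoddZ
    · exact ⟨ha.add_odd hb, ha.sub_odd hb⟩
    · exact ⟨ha.add_even hb, ha.sub_even hb⟩
    · exfalso
      have he : Even (a*a + b*b) := (ha.mul ha).add_odd (hb.mul hb)
      rw [hab] at he
      exact (Int.not_odd_iff_even.mpr he) hyoddZ
  have hre0 : (w₀ ^ z).re = (m:ℤ) := by rw [hw0]
  have him0 : (w₀ ^ z).im = (m:ℤ) + 1 := by rw [hw0]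
  have hy1 : (y : ℤ) ≠ 1 := by
    intro hc
    have : y = 1 := by exact_mod_cast hc
    omega
  rcases Nat.even_or_odd M with hMe | hMo
  · -- M even
    obtain ⟨N, hN⟩ : ∃ N, M = 2 * N := by rcases hMe with ⟨N, hN⟩; exact ⟨N, by omega⟩
    have hUz : Uu ^ z = (((-4 : ℤ) ^ N : ℤ) : GI) * Uu := by
      have h2 : Iu ^ M = ((((-1:ℤ)^N : ℤ)):GI) := by rw [hN, Iu_pow_even, neg_one_pow_cast]
      have e : (2:ℤ)^M * (-1:ℤ)^N = (-4)^N := by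
        rw [hN, pow_mul, ← mul_pow]; norm_num
      rw [hMz, pow_succ, Uu_pow_even, h2]
      congr 1
      rw [intCast_mul_cast]
      exact congrArg _ e
    -- a - b = ±1
    have hwe : w₀ = (a : GI) * Uu + ((a - b : ℤ) : GI) * ⟨0, -1⟩ := by
      ext <;> simp [Uu, Zsqrtd.re_mul, Zsqrtd.im_mul, ← hadef, ← hbdef] <;> ring
    have hdvd1 : ((a - b : ℤ) : GI) ∣ w₀ - (a:GI) * Uu := ⟨⟨0,-1⟩, by rw [hwe]; ring⟩
    have hdvdz : ((a - b : ℤ) : GI) ∣ w₀ ^ z - ((a:GI) * Uu) ^ z :=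
      dvd_trans hdvd1 (sub_dvd_pow_sub_pow _ _ z)
    set r : ℤ := a ^ z * (-4) ^ N with hrdef
    have hPz : ((a:GI) * Uu) ^ z = (r : GI) * Uu := by
      rw [mul_pow, hUz]
      have hc : ((a:GI))^z = ((a^z : ℤ):GI) := by push_cast; ring
      rw [hc, ← mul_assoc, intCast_mul_cast, hrdef]
    have hcomp : w₀ ^ z - (r:GI) * Uu = ⟨(m:ℤ) - r, ((m:ℤ)+1) - r⟩ := by
      rw [hw0]
      ext <;> simp [hα, Uu, Zsqrtd.re_mul, Zsqrtd.im_mul] <;> ring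
    rw [hPz, hcomp] at hdvdz
    rw [Zsqrtd.intCast_dvd] at hdvdz
    obtain ⟨hd1, hd2⟩ := hdvdz
    have hd3 : (a - b) ∣ 1 := by
      have hd4 : (a - b) ∣ (((m:ℤ)+1) - r) - ((m:ℤ) - r) := dvd_sub hd2 hd1
      have e : (((m:ℤ)+1) - r) - ((m:ℤ) - r) = 1 := by ring
      rwa [e] at hd4
    have hε : a - b = 1 ∨ a - b = -1 := Int.isUnit_iff.mp (isUnit_of_dvd_one hd3)
    set c : ℤ := a + b with hcdef
    set ε : ℤ := a - b with hεdef
    have h2w : (2 : GI) * w₀ = Uu * ⟨c, -ε⟩ := by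
      ext <;> simp [Uu, Zsqrtd.re_mul, Zsqrtd.im_mul, hcdef, hεdef, ← hadef, ← hbdef] <;> ring
    have hpow : ((2:GI)) ^ z * w₀ ^ z = Uu ^ z * (⟨c, -ε⟩ : GI) ^ z := by
      rw [← mul_pow, ← mul_pow, h2w]
    set ξ : GI := (⟨c, -ε⟩ : GI) ^ z with hξ
    set P : ℤ := ξ.re with hPdef
    set Q : ℤ := ξ.im with hQdef
    have h2z : ((2:GI)) ^ z = (((2:ℤ)^z : ℤ) : GI) := by push_cast; ring
    have hUξre : (Uu * ξ).re = P - Q := by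
      rw [Zsqrtd.re_mul]
      rw [show Uu.re = 1 from rfl, show Uu.im = 1 from rfl, ← hPdef, ← hQdef]
      ring
    have hUξim : (Uu * ξ).im = P + Q := by
      rw [Zsqrtd.im_mul]
      rw [show Uu.re = 1 from rfl, show Uu.im = 1 from rfl, ← hPdef, ← hQdef]
      ring
    have hre : (2:ℤ)^z * (m:ℤ) = (-4)^N * (P - Q) := by
      have h := congrArg Zsqrtd.re hpow
      rwa [h2z, re_intCast_mul, hre0, hUz, mul_assoc, re_intCast_mul, hUξre] at h
    have him : (2:ℤ)^z * ((m:ℤ) + 1) = (-4)^N * (P + Q) := by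
      have h := congrArg Zsqrtd.im hpow
      rwa [h2z, im_intCast_mul', him0, hUz, mul_assoc, im_intCast_mul', hUξim] at h
    have hsub : (2:ℤ)^(4*N+1) = (-4)^N * (2 * Q) := by
      rw [show (4*N+1) = z by omega]
      linear_combination him - hre
    have h4N : ((-4:ℤ))^N = (-1)^N * 2^(2*N) := by
      rw [show (-4:ℤ) = (-1) * 2^2 by norm_num, mul_pow, ← pow_mul]
    obtain ⟨σ, hσpm, hQval⟩ : ∃ σ : ℤ, (σ = 1 ∨ σ = -1) ∧ Q = σ * 2^M := by
      rcases Nat.even_or_odd N with hNN | hNN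
      · refine ⟨1, Or.inl rfl, ?_⟩
        rw [h4N, Even.neg_one_pow hNN, one_mul] at hsub
        have hc2 : (2:ℤ)^(2*N+1) * Q = 2^(2*N+1) * 2^(2*N) := by linear_combination -hsub
        rw [hN, one_mul]
        exact cancel_pow hc2
      · refine ⟨-1, Or.inr rfl, ?_⟩
        rw [h4N, Odd.neg_one_pow hNN] at hsub
        have hc2 : (2:ℤ)^(2*N+1) * Q = 2^(2*N+1) * (-(2^(2*N))) := by linear_combination hsub
        rw [hN, cancel_pow hc2]
        ring
    -- convert to ⟨c, 1⟩ and apply core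
    have hcodd : Odd c := hparity.1
    obtain ⟨τ, hτpm, hfinal⟩ : ∃ τ : ℤ, (τ = 1 ∨ τ = -1) ∧
        ((⟨c, 1⟩ : GI) ^ z).im = τ * 2^M := by
      rcases hε with hε1 | hε1
      · refine ⟨-σ, neg_pm hσpm, ?_⟩
        have hstar : (⟨c, -ε⟩ : GI) = star (⟨c, 1⟩ : GI) := by
          ext <;> simp [Zsqrtd.re_star, Zsqrtd.im_star, hε1]
        have hξs : ξ = star ((⟨c, 1⟩ : GI) ^ z) := by rw [hξ, hstar, ← star_pow]
        have himst := congrArg Zsqrtd.im hξs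
        rw [Zsqrtd.im_star, ← hQdef] at himst
        rw [show ((⟨c, 1⟩ : GI) ^ z).im = -Q by omega, hQval]
        ring
      · refine ⟨σ, hσpm, ?_⟩
        have hmk : (⟨c, -ε⟩ : GI) = ⟨c, 1⟩ := by rw [hε1]; norm_num
        rw [← hmk, ← hξ, ← hQdef, hQval]
    rw [hMz] at hfinal
    have hc2 := core M hM1 c τ hcodd hτpm hfinal
    have hε2 : ε^2 = 1 := by rcases hε with h | h <;> rw [h] <;> norm_num
    have h2y : c^2 + ε^2 = 2 * (y:ℤ) := by
      rw [hcdef, hεdef]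
      linear_combination 2 * hab
    rw [hc2, hε2] at h2y
    exact hy1 (by linarith)
  · -- M odd
    obtain ⟨N, hN⟩ := hMo
    have hVsq : Vu ^ 2 = ((-2 : ℤ) : GI) * Iu := by
      ext <;> simp [Vu, Iu, pow_two, Zsqrtd.re_mul, Zsqrtd.im_mul]
    have hVz : Vu ^ z = ((((-2:ℤ)^M * (-1:ℤ)^N) : ℤ) : GI) * Uu := by
      have h1 : Vu ^ (2*M) = (((-2:ℤ)^M : ℤ):GI) * Iu^M := by
        rw [pow_mul, hVsq, mul_pow]
        push_cast
        ring
      have h2 : Iu ^ M = ((((-1:ℤ)^N : ℤ)):GI) * Iu := by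
        rw [hN, Iu_pow_odd, neg_one_pow_cast]
      have hIV : Iu * Vu = Uu := by
        ext <;> simp [Iu, Vu, Uu, Zsqrtd.re_mul, Zsqrtd.im_mul]
      calc Vu ^ z = Vu^(2*M) * Vu := by rw [hMz, pow_succ]
      _ = (((-2:ℤ)^M : ℤ):GI) * (((((-1:ℤ)^N : ℤ)):GI) * Iu) * Vu := by rw [h1, h2]
      _ = (((-2:ℤ)^M : ℤ):GI) * ((((-1:ℤ)^N : ℤ)):GI) * (Iu * Vu) := by ring
      _ = ((((-2:ℤ)^M * (-1:ℤ)^N) : ℤ) : GI) * Uu := by rw [intCast_mul_cast, hIV]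
    -- a + b = ±1
    have hwe : w₀ = (a : GI) * Vu + ((a + b : ℤ) : GI) * Iu := by
      ext <;> simp [Vu, Iu, Zsqrtd.re_mul, Zsqrtd.im_mul, ← hadef, ← hbdef] <;> ring
    have hdvd1 : ((a + b : ℤ) : GI) ∣ w₀ - (a:GI) * Vu := ⟨Iu, by rw [hwe]; ring⟩
    have hdvdz : ((a + b : ℤ) : GI) ∣ w₀ ^ z - ((a:GI) * Vu) ^ z :=
      dvd_trans hdvd1 (sub_dvd_pow_sub_pow _ _ z)
    set r : ℤ := a ^ z * ((-2)^M * (-1)^N) with hrdef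
    have hPz : ((a:GI) * Vu) ^ z = (r : GI) * Uu := by
      rw [mul_pow, hVz]
      have hc : ((a:GI))^z = ((a^z : ℤ):GI) := by push_cast; ring
      rw [hc, ← mul_assoc, intCast_mul_cast, hrdef]
    have hcomp : w₀ ^ z - (r:GI) * Uu = ⟨(m:ℤ) - r, ((m:ℤ)+1) - r⟩ := by
      rw [hw0]
      ext <;> simp [hα, Uu, Zsqrtd.re_mul, Zsqrtd.im_mul] <;> ring
    rw [hPz, hcomp] at hdvdz
    rw [Zsqrtd.intCast_dvd] at hdvdz
    obtain ⟨hd1, hd2⟩ := hdvdz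
    have hd3 : (a + b) ∣ 1 := by
      have hd4 : (a + b) ∣ (((m:ℤ)+1) - r) - ((m:ℤ) - r) := dvd_sub hd2 hd1
      have e : (((m:ℤ)+1) - r) - ((m:ℤ) - r) = 1 := by ring
      rwa [e] at hd4
    have hε : a + b = 1 ∨ a + b = -1 := Int.isUnit_iff.mp (isUnit_of_dvd_one hd3)
    set c : ℤ := a - b with hcdef
    set ε : ℤ := a + b with hεdef
    have h2w : (2 : GI) * w₀ = Vu * ⟨c, ε⟩ := by
      ext <;> simp [Vu, Zsqrtd.re_mul, Zsqrtd.im_mul, hcdef, hεdef, ← hadef, ← hbdef] <;> ring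
    have hpow : ((2:GI)) ^ z * w₀ ^ z = Vu ^ z * (⟨c, ε⟩ : GI) ^ z := by
      rw [← mul_pow, ← mul_pow, h2w]
    set ξ : GI := (⟨c, ε⟩ : GI) ^ z with hξ
    set P : ℤ := ξ.re with hPdef
    set Q : ℤ := ξ.im with hQdef
    have h2z : ((2:GI)) ^ z = (((2:ℤ)^z : ℤ) : GI) := by push_cast; ring
    have hUξre : (Uu * ξ).re = P - Q := by
      rw [Zsqrtd.re_mul]
      rw [show Uu.re = 1 from rfl, show Uu.im = 1 from rfl, ← hPdef, ← hQdef]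
      ring
    have hUξim : (Uu * ξ).im = P + Q := by
      rw [Zsqrtd.im_mul]
      rw [show Uu.re = 1 from rfl, show Uu.im = 1 from rfl, ← hPdef, ← hQdef]
      ring
    have hre : (2:ℤ)^z * (m:ℤ) = ((-2)^M * (-1)^N) * (P - Q) := by
      have h := congrArg Zsqrtd.re hpow
      rwa [h2z, re_intCast_mul, hre0, hVz, mul_assoc, re_intCast_mul, hUξre] at h
    have him : (2:ℤ)^z * ((m:ℤ) + 1) = ((-2)^M * (-1)^N) * (P + Q) := by
      have h := congrArg Zsqrtd.im hpow
      rwa [h2z, im_intCast_mul', him0, hVz, mul_assoc, im_intCast_mul', hUξim] at h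
    have hsub : (2:ℤ)^(4*N+3) = ((-2)^M * (-1)^N) * (2 * Q) := by
      rw [show (4*N+3) = z by omega]
      linear_combination him - hre
    have h2M : ((-2:ℤ))^M = -(2^(2*N+1)) := by
      rw [hN, show (-2:ℤ) = (-1) * 2 by norm_num, mul_pow]
      rw [Odd.neg_one_pow ⟨N, rfl⟩]
      ring
    obtain ⟨σ, hσpm, hQval⟩ : ∃ σ : ℤ, (σ = 1 ∨ σ = -1) ∧ Q = σ * 2^M := by
      rcases Nat.even_or_odd N with hNN | hNN
      · refine ⟨-1, Or.inr rfl, ?_⟩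
        rw [h2M, Even.neg_one_pow hNN] at hsub
        have hc2 : (2:ℤ)^(2*N+2) * Q = 2^(2*N+2) * (-(2^(2*N+1))) := by linear_combination hsub
        rw [hN, cancel_pow hc2]
        ring
      · refine ⟨1, Or.inl rfl, ?_⟩
        rw [h2M, Odd.neg_one_pow hNN] at hsub
        have hc2 : (2:ℤ)^(2*N+2) * Q = 2^(2*N+2) * 2^(2*N+1) := by linear_combination -hsub
        rw [hN, one_mul]
        exact cancel_pow hc2
    have hcodd : Odd c := hparity.2
    obtain ⟨τ, hτpm, hfinal⟩ : ∃ τ : ℤ, (τ = 1 ∨ τ = -1) ∧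
        ((⟨c, 1⟩ : GI) ^ z).im = τ * 2^M := by
      rcases hε with hε1 | hε1
      · refine ⟨σ, hσpm, ?_⟩
        have hmk : (⟨c, ε⟩ : GI) = ⟨c, 1⟩ := by rw [hε1]
        rw [← hmk, ← hξ, ← hQdef, hQval]
      · refine ⟨-σ, neg_pm hσpm, ?_⟩
        have hstar : (⟨c, ε⟩ : GI) = star (⟨c, 1⟩ : GI) := by
          ext <;> simp [Zsqrtd.re_star, Zsqrtd.im_star, hε1]
        have hξs : ξ = star ((⟨c, 1⟩ : GI) ^ z) := by rw [hξ, hstar, ← star_pow]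
        have himst := congrArg Zsqrtd.im hξs
        rw [Zsqrtd.im_star, ← hQdef] at himst
        rw [show ((⟨c, 1⟩ : GI) ^ z).im = -Q by omega, hQval]
        ring
    rw [hMz] at hfinal
    have hc2 := core M hM1 c τ hcodd hτpm hfinal
    have hε2 : ε^2 = 1 := by rcases hε with h | h <;> rw [h] <;> norm_num
    have h2y : c^2 + ε^2 = 2 * (y:ℤ) := by
      rw [hcdef, hεdef]
      linear_combination 2 * hab
    rw [hc2, hε2] at h2y
    exact hy1 (by linarith)



end Stmt3

theorem stmt_3 : ¬ ∃ x y z : ℕ, 0 < x ∧ 1 < y ∧ Odd z ∧ 1 < z ∧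
    x ^ 2 + 1 = 2 * y ^ z := Stmt3.main
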